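/- Let A ∈ ℂ^{m×N}. Suppose that for all z ∈ ℂ^N with supp(z) contained in some admissible support class, (1−δ)‖z‖₂² ≤ ‖Az‖₂² ≤ (1+δ)‖z‖₂², with 0 < δ < 1/2. Let c be supported on an admissible set Λ*, let ξ ∈ ℂ^m, and let g̃ = Ac + ξ/√m. Define the iteration c^{n+1} = H(c^n + A*(g̃ − Ac^n)), where H(z) is a best approximation of z among vectors supported on admissible sets, and assume all unions supp(c^n) ∪ supp(c^{n+1}) ∪ Λ* are admissible. Then ‖c^n − c‖₂ ≤ (2δ)^n‖c^0 − c‖₂ + (2√(1+δ)/((1−2δ)√m))‖ξ‖₂. -/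

import Mathlib

open Function RCLike
open scoped InnerProductSpace

set_option maxHeartbeats 1600000 in
theorem iterative_hard_thresholding_convergence
    (m N : ℕ) (hm : 0 < m)
    (A : EuclideanSpace ℂ (Fin N) →L[ℂ] EuclideanSpace ℂ (Fin m))
    (𝒜 : Set (Set (Fin N))) (δ : ℝ) (hδ0 : 0 < δ) (hδ : δ < 1 / 2)
    (hRIP : ∀ S ∈ 𝒜, ∀ z : EuclideanSpace ℂ (Fin N), Function.support z ⊆ S →
      (1 - δ) * ‖z‖ ^ 2 ≤ ‖A z‖ ^ 2 ∧ ‖A z‖ ^ 2 ≤ (1 + δ) * ‖z‖ ^ 2)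
    (c : EuclideanSpace ℂ (Fin N)) (Λstar : Set (Fin N)) (hΛ : Λstar ∈ 𝒜)
    (hsuppc : Function.support c ⊆ Λstar)
    (ξ : EuclideanSpace ℂ (Fin m))
    (g : EuclideanSpace ℂ (Fin m))
    (hg : g = A c + ((Real.sqrt m : ℂ))⁻¹ • ξ)
    (cseq : ℕ → EuclideanSpace ℂ (Fin N))
    (hadm : ∀ n, ∃ S ∈ 𝒜, Function.support (cseq n) ⊆ S)
    (hunion : ∀ n, Function.support (cseq n) ∪ Function.support (cseq (n + 1)) ∪ Λstar ∈ 𝒜)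
    (hbest : ∀ n, ∀ w : EuclideanSpace ℂ (Fin N),
      (∃ S ∈ 𝒜, Function.support w ⊆ S) →
        ‖(cseq n + ContinuousLinearMap.adjoint A (g - A (cseq n))) - cseq (n + 1)‖
          ≤ ‖(cseq n + ContinuousLinearMap.adjoint A (g - A (cseq n))) - w‖) :
    ∀ n, ‖cseq n - c‖ ≤ (2 * δ) ^ n * ‖cseq 0 - c‖
      + (2 * Real.sqrt (1 + δ) / ((1 - 2 * δ) * Real.sqrt m)) * ‖ξ‖ := by
  have hm' : (0:ℝ) < Real.sqrt m := Real.sqrt_pos.mpr (by exact_mod_cast hm)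
  have hδ1 : (0:ℝ) ≤ 1 + δ := by linarith
  have hsq : Real.sqrt (1 + δ) ^ 2 = 1 + δ := Real.sq_sqrt hδ1
  have hsqnn : (0:ℝ) ≤ Real.sqrt (1 + δ) := Real.sqrt_nonneg _
  -- upper RIP, norm form
  have hupper : ∀ S ∈ 𝒜, ∀ z : EuclideanSpace ℂ (Fin N), Function.support z ⊆ S →
      ‖A z‖ ≤ Real.sqrt (1 + δ) * ‖z‖ := by
    intro S hS z hz
    have h := (hRIP S hS z hz).2
    have h2 : ‖A z‖ ^ 2 ≤ (Real.sqrt (1 + δ) * ‖z‖) ^ 2 := by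
      rw [mul_pow, hsq]; linarith
    have hb : (0:ℝ) ≤ Real.sqrt (1 + δ) * ‖z‖ := mul_nonneg hsqnn (norm_nonneg z)
    nlinarith [norm_nonneg (A z)]
  -- unnormalized polarization bound
  have base : ∀ S ∈ 𝒜, ∀ x y : EuclideanSpace ℂ (Fin N),
      Function.support x ⊆ S → Function.support y ⊆ S →
      re ⟪x, y⟫_ℂ - re ⟪A x, A y⟫_ℂ ≤ δ * (‖x‖ ^ 2 + ‖y‖ ^ 2) / 2 := by
    intro S hS x y hx hy
    have hxy : Function.support (x + y) ⊆ S :=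
      (Function.support_add x y).trans (Set.union_subset hx hy)
    have hxy' : Function.support (x - y) ⊆ S :=
      (Function.support_sub x y).trans (Set.union_subset hx hy)
    have h1 := (hRIP S hS (x + y) hxy).1
    have h2 := (hRIP S hS (x - y) hxy').2
    have e1 : ‖x + y‖ ^ 2 = ‖x‖ ^ 2 + 2 * re ⟪x, y⟫_ℂ + ‖y‖ ^ 2 := norm_add_sq x y
    have e2 : ‖x - y‖ ^ 2 = ‖x‖ ^ 2 - 2 * re ⟪x, y⟫_ℂ + ‖y‖ ^ 2 := norm_sub_sq x y
    have e3 : ‖A (x + y)‖ ^ 2 = ‖A x‖ ^ 2 + 2 * re ⟪A x, A y⟫_ℂ + ‖A y‖ ^ 2 := by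
      rw [map_add]; exact norm_add_sq _ _
    have e4 : ‖A (x - y)‖ ^ 2 = ‖A x‖ ^ 2 - 2 * re ⟪A x, A y⟫_ℂ + ‖A y‖ ^ 2 := by
      rw [map_sub]; exact norm_sub_sq _ _
    have b1 : ‖x + y‖ ^ 2 - ‖A (x + y)‖ ^ 2 ≤ δ * ‖x + y‖ ^ 2 := by nlinarith
    have b2 : ‖A (x - y)‖ ^ 2 - ‖x - y‖ ^ 2 ≤ δ * ‖x - y‖ ^ 2 := by nlinarith
    have par : ‖x + y‖ ^ 2 + ‖x - y‖ ^ 2 = 2 * (‖x‖ ^ 2 + ‖y‖ ^ 2) := by linarith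
    have cc : δ * ‖x + y‖ ^ 2 + δ * ‖x - y‖ ^ 2 = 2 * (δ * (‖x‖ ^ 2 + ‖y‖ ^ 2)) := by
      rw [← mul_add, par]; ring
    linarith
  -- normalized polarization bound
  have hpolar : ∀ S ∈ 𝒜, ∀ x y : EuclideanSpace ℂ (Fin N),
      Function.support x ⊆ S → Function.support y ⊆ S →
      re ⟪x, y⟫_ℂ - re ⟪A x, A y⟫_ℂ ≤ δ * (‖x‖ * ‖y‖) := by
    intro S hS x y hx hy
    set a := ‖x‖ with ha
    set b := ‖y‖ with hb
    have hx' : Function.support ((b : ℂ) • x) ⊆ S :=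
      (Function.support_const_smul_subset _ x).trans hx
    have hy' : Function.support ((a : ℂ) • y) ⊆ S :=
      (Function.support_const_smul_subset _ y).trans hy
    have h := base S hS _ _ hx' hy'
    have hna : ‖(b : ℂ) • x‖ = b * a := by
      rw [norm_smul]; simp [abs_of_nonneg (norm_nonneg y)]
      simp only [abs_of_nonneg (show (0:ℝ) ≤ b from norm_nonneg y), ha]
    have hnb : ‖(a : ℂ) • y‖ = a * b := by
      rw [norm_smul]; simp [abs_of_nonneg (norm_nonneg x)]
      simp only [abs_of_nonneg (show (0:ℝ) ≤ a from norm_nonneg x), hb]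
    have hi1 : re ⟪(b : ℂ) • x, (a : ℂ) • y⟫_ℂ = b * a * re ⟪x, y⟫_ℂ := by
      rw [inner_smul_left, inner_smul_right]
      simp [Complex.mul_re]; ring
    have hA1 : A ((b : ℂ) • x) = (b : ℂ) • A x := by simp
    have hA2 : A ((a : ℂ) • y) = (a : ℂ) • A y := by simp
    have hi2 : re ⟪A ((b : ℂ) • x), A ((a : ℂ) • y)⟫_ℂ = b * a * re ⟪A x, A y⟫_ℂ := by
      rw [hA1, hA2, inner_smul_left, inner_smul_right]
      simp [Complex.mul_re]; ring
    rw [hi1, hi2, hna, hnb] at h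
    -- h : b*a*r - b*a*s ≤ δ * ((b*a)^2 + (a*b)^2) / 2 = δ * (a*b)^2
    have hanon : 0 ≤ a := norm_nonneg x
    have hbnon : 0 ≤ b := norm_nonneg y
    rcases eq_or_lt_of_le (mul_nonneg hanon hbnon) with hab | hab
    · -- a * b = 0
      have hz : re ⟪x, y⟫_ℂ - re ⟪A x, A y⟫_ℂ ≤ 0 := by
        rcases mul_eq_zero.mp hab.symm with h0 | h0
        · have : x = 0 := norm_eq_zero.mp h0
          simp [this]
        · have : y = 0 := norm_eq_zero.mp h0
          simp [this]
      calc re ⟪x, y⟫_ℂ - re ⟪A x, A y⟫_ℂ ≤ 0 := hz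
        _ ≤ δ * (a * b) := by positivity
    · -- a * b > 0
      have key : (a * b) * (re ⟪x, y⟫_ℂ - re ⟪A x, A y⟫_ℂ) ≤ (a * b) * (δ * (a * b)) := by
        nlinarith
      exact le_of_mul_le_mul_left key hab
  -- constant
  set K : ℝ := 2 * Real.sqrt (1 + δ) / Real.sqrt m * ‖ξ‖ with hKdef
  have hKnn : 0 ≤ K := by positivity
  -- one-step estimate
  have step : ∀ n, ‖cseq (n + 1) - c‖ ≤ 2 * δ * ‖cseq n - c‖ + K := by
    intro n
    set S := Function.support (cseq n) ∪ Function.support (cseq (n + 1)) ∪ Λstar with hSdef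
    have hS := hunion n
    have hxS : Function.support (cseq n - c) ⊆ S := by
      refine (Function.support_sub _ _).trans (Set.union_subset ?_ ?_)
      · exact fun i hi => Or.inl (Or.inl hi)
      · exact fun i hi => Or.inr (hsuppc hi)
    have hwS : Function.support (cseq (n + 1) - c) ⊆ S := by
      refine (Function.support_sub _ _).trans (Set.union_subset ?_ ?_)
      · exact fun i hi => Or.inl (Or.inr hi)
      · exact fun i hi => Or.inr (hsuppc hi)
    set x := cseq n - c with hxdef
    set w := cseq (n + 1) - c with hwdef
    set v := cseq n + ContinuousLinearMap.adjoint A (g - A (cseq n)) with hvdef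
    have hb : ‖v - cseq (n + 1)‖ ≤ ‖v - c‖ := hbest n c ⟨Λstar, hΛ, hsuppc⟩
    have hb2 : ‖v - cseq (n + 1)‖ ^ 2 ≤ ‖v - c‖ ^ 2 := by
      have := norm_nonneg (v - cseq (n + 1))
      nlinarith
    have hvw : v - cseq (n + 1) = (v - c) - w := by rw [hwdef]; abel
    have hexp : ‖(v - c) - w‖ ^ 2 = ‖v - c‖ ^ 2 - 2 * re ⟪v - c, w⟫_ℂ + ‖w‖ ^ 2 :=
      norm_sub_sq _ _
    have hw2 : ‖w‖ ^ 2 ≤ 2 * re ⟪v - c, w⟫_ℂ := by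
      rw [hvw, hexp] at hb2; linarith
    -- decompose v - c
    have hvc : v - c = x - ContinuousLinearMap.adjoint A (A x)
        + ContinuousLinearMap.adjoint A (((Real.sqrt m : ℂ))⁻¹ • ξ) := by
      rw [hvdef, hg, hxdef]
      have : A c + ((Real.sqrt m : ℂ))⁻¹ • ξ - A (cseq n)
          = -(A (cseq n - c)) + ((Real.sqrt m : ℂ))⁻¹ • ξ := by
        rw [map_sub]; abel
      rw [this, map_add, map_neg]
      abel
    have hinner : re ⟪v - c, w⟫_ℂ
        = re ⟪x, w⟫_ℂ - re ⟪A x, A w⟫_ℂ + re ⟪((Real.sqrt m : ℂ))⁻¹ • ξ, A w⟫_ℂ := by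
      rw [hvc, inner_add_left, inner_sub_left,
        ContinuousLinearMap.adjoint_inner_left, ContinuousLinearMap.adjoint_inner_left]
      simp only [map_add, map_sub]
    have t1 : re ⟪x, w⟫_ℂ - re ⟪A x, A w⟫_ℂ ≤ δ * (‖x‖ * ‖w‖) := hpolar S hS x w hxS hwS
    have t2 : re ⟪((Real.sqrt m : ℂ))⁻¹ • ξ, A w⟫_ℂ
        ≤ (Real.sqrt m)⁻¹ * ‖ξ‖ * (Real.sqrt (1 + δ) * ‖w‖) := by
      have h1 : re ⟪((Real.sqrt m : ℂ))⁻¹ • ξ, A w⟫_ℂ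
          ≤ ‖((Real.sqrt m : ℂ))⁻¹ • ξ‖ * ‖A w‖ := re_inner_le_norm _ _
      have h2 : ‖((Real.sqrt m : ℂ))⁻¹ • ξ‖ = (Real.sqrt m)⁻¹ * ‖ξ‖ := by
        rw [norm_smul]
        simp [abs_of_pos hm']
      have h3 : ‖A w‖ ≤ Real.sqrt (1 + δ) * ‖w‖ := hupper S hS w hwS
      rw [h2] at h1
      refine h1.trans ?_
      have : (0:ℝ) ≤ (Real.sqrt m)⁻¹ * ‖ξ‖ := by positivity
      exact mul_le_mul_of_nonneg_left h3 this
    have hwb : ‖w‖ ^ 2 ≤ 2 * δ * ‖x‖ * ‖w‖ + K * ‖w‖ := by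
      rw [hinner] at hw2
      have : K * ‖w‖ = 2 * ((Real.sqrt m)⁻¹ * ‖ξ‖ * (Real.sqrt (1 + δ) * ‖w‖)) := by
        rw [hKdef]; field_simp
      rw [this]; linarith
    rcases eq_or_lt_of_le (norm_nonneg w) with hw0 | hw0
    · rw [← hw0]
      have : 0 ≤ 2 * δ * ‖x‖ := by positivity
      linarith
    · have key : ‖w‖ * ‖w‖ ≤ (2 * δ * ‖x‖ + K) * ‖w‖ := by nlinarith
      exact le_of_mul_le_mul_right (by linarith [key]) hw0
  -- conclusion by induction
  have hden : (0:ℝ) < 1 - 2 * δ := by linarith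
  have hC : (2 * Real.sqrt (1 + δ) / ((1 - 2 * δ) * Real.sqrt m)) * ‖ξ‖ = K / (1 - 2 * δ) := by
    have h1 : Real.sqrt m ≠ 0 := ne_of_gt hm'
    have h2 : (1 - 2 * δ) ≠ 0 := ne_of_gt hden
    rw [hKdef]
    field_simp
  intro n
  rw [hC]
  induction n with
  | zero =>
    simp only [pow_zero, one_mul]
    have : 0 ≤ K / (1 - 2 * δ) := div_nonneg hKnn hden.le
    linarith
  | succ n ih =>
    have hstep := step n
    have hρ : 0 < 2 * δ := by linarith
    have := mul_le_mul_of_nonneg_left ih hρ.le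
    have hKK : 2 * δ * (K / (1 - 2 * δ)) + K = K / (1 - 2 * δ) := by
      field_simp; ring
    calc ‖cseq (n + 1) - c‖ ≤ 2 * δ * ‖cseq n - c‖ + K := hstep
      _ ≤ 2 * δ * ((2 * δ) ^ n * ‖cseq 0 - c‖ + K / (1 - 2 * δ)) + K := by linarith
      _ = (2 * δ) ^ (n + 1) * ‖cseq 0 - c‖ + (2 * δ * (K / (1 - 2 * δ)) + K) := by ring
      _ = (2 * δ) ^ (n + 1) * ‖cseq 0 - c‖ + K / (1 - 2 * δ) := by rw [hKK]
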